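/- Let (X,d) be a compact metric space, Y ⊆ X nonempty closed, U = {(x,y,t) ∈ X × Y × [0,1] : t > 0}, and Z = {(x,y,t) ∈ X × Y × [0,1] : t·d(x,Y) ≤ 2·d(x,Y) − d(x,y)}. Then the restriction of the first coordinate projection p₁ : U ∩ Z → X, (x,y,t) ↦ x, is an open map onto its image. -/

import Mathlib

open Metric

/-- The set `Z = {(x,y,t) ∈ X × Y × [0,1] : t·d(x,Y) ≤ 2·d(x,Y) − d(x,y)}`. -/
def Zset {X : Type*} [MetricSpace X] (Y : Set X) : Set (X × X × ℝ) :=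
  {p | p.2.1 ∈ Y ∧ p.2.2 ∈ Set.Icc (0 : ℝ) 1 ∧
    p.2.2 * infDist p.1 Y ≤ 2 * infDist p.1 Y - dist p.1 p.2.1}

/-- `U ∩ Z`, the part of `Z` with `t > 0`. -/
def UZset {X : Type*} [MetricSpace X] (Y : Set X) : Set (X × X × ℝ) :=
  {p | p ∈ Zset Y ∧ 0 < p.2.2}

/-- The first coordinate projection `p₁ : U ∩ Z → X` is an open map onto its image:
images of relatively open subsets of `U ∩ Z` are relatively open in `p₁(U ∩ Z)`. -/
theorem UZset_proj_isOpenMap_onto_image {X : Type*} [MetricSpace X] [CompactSpace X]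
    (Y : Set X) (hYne : Y.Nonempty) (hYcl : IsClosed Y) :
    ∀ V : Set (X × X × ℝ), IsOpen V →
      ∃ W : Set X, IsOpen W ∧
        Prod.fst '' (V ∩ UZset Y) = W ∩ (Prod.fst '' UZset Y) := by
  intro V hV
  refine ⟨Prod.fst '' (V ∩ UZset Y), ?_, ?_⟩
  · rw [isOpen_iff_mem_nhds]
    rintro _ ⟨⟨x', y₀, t₀⟩, ⟨hpV, hpUZ⟩, rfl⟩
    obtain ⟨⟨hy₀Y, ⟨ht₀0, ht₀1⟩, hineq⟩, ht₀pos⟩ := hpUZ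
    obtain ⟨ε, hε, hball⟩ := Metric.isOpen_iff.mp hV _ hpV
    simp only at hy₀Y ht₀0 ht₀1 hineq ht₀pos ⊢
    rcases eq_or_lt_of_le (infDist_nonneg (x := x') (s := Y)) with hD | hD
    · -- infDist x' Y = 0, hence y₀ = x'
      have hdist0 : dist x' y₀ ≤ 0 := by nlinarith
      have hy₀ : x' = y₀ := dist_le_zero.mp hdist0
      subst hy₀
      have hx'Y : x' ∈ Y := hy₀Y
      rw [Metric.mem_nhds_iff]
      refine ⟨ε / 2, by linarith, fun x hx => ?_⟩
      obtain ⟨y, hyY, hxy⟩ := (hYcl.isCompact).exists_infDist_eq_dist hYne x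
      have hxx' : dist x x' < ε / 2 := hx
      have hinfle : infDist x Y ≤ dist x x' := infDist_le_dist_of_mem hx'Y
      refine ⟨(x, y, t₀), ⟨hball ?_, ⟨hyY, ⟨ht₀0, ht₀1⟩, ?_⟩, ht₀pos⟩, rfl⟩
      · simp only [mem_ball, Prod.dist_eq, max_lt_iff, dist_self]
        refine ⟨by linarith, ?_, hε⟩
        calc dist y x' ≤ dist y x + dist x x' := dist_triangle _ _ _
          _ = infDist x Y + dist x x' := by rw [dist_comm, ← hxy]
          _ < ε := by linarith
      · rw [← hxy]
        have h0 : (0:ℝ) ≤ infDist x Y := infDist_nonneg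
        nlinarith
    · -- infDist x' Y > 0
      set D := infDist x' Y with hDdef
      set δ := min (ε / 2) (t₀ / 2) with hδdef
      have hδpos : 0 < δ := lt_min (by linarith) (by linarith)
      have hδε : δ ≤ ε / 2 := min_le_left _ _
      have hδt : δ ≤ t₀ / 2 := min_le_right _ _
      set t' := t₀ - δ with ht'def
      have ht'pos : 0 < t' := by simp only [ht'def]; linarith
      have ht'1 : t' ≤ 1 := by simp only [ht'def]; linarith
      have hcont : Continuous fun x => (2 - t') * infDist x Y - dist x y₀ :=
        ((continuous_const.mul (continuous_infDist_pt Y)).sub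
          (continuous_id.dist continuous_const))
      have hS : IsOpen {x | 0 < (2 - t') * infDist x Y - dist x y₀} :=
        isOpen_lt continuous_const hcont
      have hx'S : x' ∈ {x | 0 < (2 - t') * infDist x Y - dist x y₀} := by
        simp only [Set.mem_setOf_eq]
        nlinarith
      filter_upwards [hS.mem_nhds hx'S, Metric.ball_mem_nhds x' hε] with x hfx hxball
      refine ⟨(x, y₀, t'), ⟨hball ?_, ⟨hy₀Y, ⟨le_of_lt ht'pos, ht'1⟩, ?_⟩, ht'pos⟩, rfl⟩
      · simp only [mem_ball, Prod.dist_eq, max_lt_iff, dist_self]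
        refine ⟨hxball, hε, ?_⟩
        · rw [Real.dist_eq]
          have : |t' - t₀| = δ := by
            rw [ht'def]; rw [abs_of_nonpos (by linarith)]; ring
          rw [this]; linarith
      · linarith
  · rw [Set.inter_eq_self_of_subset_left
      (Set.image_mono Set.inter_subset_right)]
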